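/- Let j be odd, x ⊆ ⟦n⟧_{j+1}, x̄, x̂ ⊆ ⟦n⟧_{j+2}. Suppose x, x̄, x̂ are each well-formed, x̄⁻ ∩ x = ∅, and x̂⁺ ∩ x = ∅. Then x̄⊖ ∪ x⊙ ∪ x̂⊕ ⊆ ⟦n+1⟧_{j+2} is well-formed. In particular, elements of x̄⊖ and x̂⊕ share no face at all, since any common face would end simultaneously in ⊖ and ⊕. -/

import Mathlib

/-- The three symbols `⊖`, `⊙`, `⊕`. -/
inductive CSym : Type
  | minus : CSym
  | mid : CSym
  | plus : CSym
deriving DecidableEq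

/-- `Str n j` is `⟦n⟧_j`: strings of length `n` over `{⊖,⊙,⊕}` with exactly `j`
occurrences of `⊙`. -/
def Str (n j : ℕ) : Type := {l : List CSym // l.length = n ∧ l.count CSym.mid = j}

/-- The even faces `a⁺` of `a ∈ ⟦n⟧_{j+1}`: replace the `i`-th occurrence of `⊙`
by `⊕` if `i` is odd (i.e. the number of earlier `⊙`'s is even), and by `⊖` if
`i` is even. -/
def posF {n j : ℕ} (a : Str n (j+1)) : Set (Str n j) :=
  {b | ∃ (q : ℕ) (h : q < a.1.length), a.1.get ⟨q, h⟩ = CSym.mid ∧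
    b.1 = a.1.set q (if Even ((a.1.take q).count CSym.mid) then CSym.plus else CSym.minus)}

/-- The odd faces `a⁻` of `a ∈ ⟦n⟧_{j+1}`: replace the `i`-th occurrence of `⊙`
by `⊖` if `i` is odd, and by `⊕` if `i` is even. -/
def negF {n j : ℕ} (a : Str n (j+1)) : Set (Str n j) :=
  {b | ∃ (q : ℕ) (h : q < a.1.length), a.1.get ⟨q, h⟩ = CSym.mid ∧
    b.1 = a.1.set q (if Even ((a.1.take q).count CSym.mid) then CSym.minus else CSym.plus)}

def sPos {n j : ℕ} (ξ : Set (Str n (j+1))) : Set (Str n j) := ⋃ a ∈ ξ, posF a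
def sNeg {n j : ℕ} (ξ : Set (Str n (j+1))) : Set (Str n j) := ⋃ a ∈ ξ, negF a

/-- Append `⊖` to a string. -/
def appM {n j : ℕ} (a : Str n j) : Str (n+1) j :=
  ⟨a.1 ++ [CSym.minus], by
    refine ⟨by simp [a.2.1], ?_⟩
    simp [List.count_append, a.2.2, List.count_singleton]⟩

/-- Append `⊕` to a string. -/
def appP {n j : ℕ} (a : Str n j) : Str (n+1) j :=
  ⟨a.1 ++ [CSym.plus], by
    refine ⟨by simp [a.2.1], ?_⟩
    simp [List.count_append, a.2.2, List.count_singleton]⟩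

/-- Append `⊙` to a string. -/
def appO {n j : ℕ} (a : Str n j) : Str (n+1) (j+1) :=
  ⟨a.1 ++ [CSym.mid], by
    refine ⟨by simp [a.2.1], ?_⟩
    simp [List.count_append, a.2.2, List.count_singleton]⟩

/-- A subset of `⟦n⟧_{j+1}` is well-formed if distinct elements share no even
face and no odd face. -/
def WfC {n j : ℕ} (ξ : Set (Str n (j+1))) : Prop :=
  ∀ a ∈ ξ, ∀ b ∈ ξ, a ≠ b → posF a ∩ posF b = ∅ ∧ negF a ∩ negF b = ∅

/-- `ξ` moves `μ` to `π`. -/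
def MovesC {n j : ℕ} (ξ : Set (Str n (j+1))) (μ π : Set (Str n j)) : Prop :=
  π = (μ ∪ sPos ξ) \ sNeg ξ ∧ μ = (π ∪ sNeg ξ) \ sPos ξ

section Aux

private lemma app_inj_sym {l l' : List CSym} {s t : CSym} (h : l ++ [s] = l' ++ [t]) :
    l = l' ∧ s = t := by
  have h2 := List.append_inj' h rfl
  exact ⟨h2.1, by simpa using h2.2⟩

/-- Generic face operator: replace a `⊙` at position `q` by `f (count of earlier ⊙'s)`. -/
private def face (f : ℕ → CSym) {n j : ℕ} (a : Str n (j+1)) : Set (Str n j) :=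
  {b | ∃ (q : ℕ) (h : q < a.1.length), a.1.get ⟨q, h⟩ = CSym.mid ∧
    b.1 = a.1.set q (f ((a.1.take q).count CSym.mid))}

private lemma posF_eq_face {n j : ℕ} (a : Str n (j+1)) :
    posF a = face (fun k => if Even k then CSym.plus else CSym.minus) a := rfl

private lemma negF_eq_face {n j : ℕ} (a : Str n (j+1)) :
    negF a = face (fun k => if Even k then CSym.minus else CSym.plus) a := rfl

/-- Append an arbitrary non-`⊙` symbol. -/
private def apps (s : CSym) (hs : s ≠ CSym.mid) {n j : ℕ} (a : Str n j) : Str (n+1) j :=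
  ⟨a.1 ++ [s], by
    refine ⟨by simp [a.2.1], ?_⟩
    rw [List.count_append,
      List.count_eq_zero.mpr (show CSym.mid ∉ [s] by simp [Ne.symm hs])]
    exact a.2.2⟩

private lemma apps_val {n j : ℕ} (s : CSym) (hs : s ≠ CSym.mid) (a : Str n j) :
    (apps s hs a).1 = a.1 ++ [s] := rfl

private lemma appM_eq {n j : ℕ} (a : Str n j) :
    appM a = apps CSym.minus (by simp) a := Subtype.ext rfl

private lemma appP_eq {n j : ℕ} (a : Str n j) :
    appP a = apps CSym.plus (by simp) a := Subtype.ext rfl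

private lemma apps_injective (s : CSym) (hs : s ≠ CSym.mid) {n j : ℕ} :
    Function.Injective (apps s hs (n := n) (j := j)) := by
  intro a b h
  exact Subtype.ext (app_inj_sym (congrArg Subtype.val h)).1

private lemma appO_injective {n j : ℕ} :
    Function.Injective (appO (n := n) (j := j)) := by
  intro a b h
  exact Subtype.ext (app_inj_sym (congrArg Subtype.val h)).1

private lemma face_apps (f : ℕ → CSym) {s : CSym} (hs : s ≠ CSym.mid) {n j : ℕ}
    (b : Str n (j+2)) :
    face f (apps s hs b) = apps s hs '' face f b := by
  have hlb : b.1.length = n := b.2.1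
  ext c
  constructor
  · rintro ⟨q, h, hmid, hset⟩
    simp only [List.get_eq_getElem] at hmid
    have hqn1 : q < n + 1 := by
      have : q < (b.1 ++ [s]).length := h
      simpa [hlb] using this
    have hmid' : (b.1 ++ [s])[q]'(by simp; omega) = CSym.mid := hmid
    have hq : q < b.1.length := by
      rcases Nat.lt_or_ge q b.1.length with h' | h'
      · exact h'
      · exfalso
        have hqe : q = b.1.length := by omega
        have hs' : (b.1 ++ [s])[q]'(by simp; omega) = s :=
          List.getElem_concat_length hqe _
        exact hs (hs'.symm.trans hmid')
    have hget : (b.1 ++ [s])[q]'(by simp; omega) = b.1[q] :=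
      List.getElem_append_left hq
    have hset' : c.1 = b.1.set q (f ((b.1.take q).count CSym.mid)) ++ [s] := by
      rw [hset]
      show (b.1 ++ [s]).set q (f ((List.take q (b.1 ++ [s])).count CSym.mid)) = _
      rw [List.take_append_of_le_length (le_of_lt hq), List.set_append, if_pos hq]
    have hccnt : c.1.count CSym.mid = j + 1 := c.2.2
    refine ⟨⟨b.1.set q (f ((b.1.take q).count CSym.mid)), ?_, ?_⟩, ⟨q, hq, ?_, rfl⟩, ?_⟩
    · simp [hlb]
    · have h0 : List.count CSym.mid [s] = 0 := List.count_eq_zero.mpr (by simp [Ne.symm hs])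
      rw [hset', List.count_append, h0] at hccnt
      omega
    · simp only [List.get_eq_getElem]
      exact hget.symm.trans hmid'
    · exact Subtype.ext hset'.symm
  · rintro ⟨c', ⟨q, hq, hmid, hset⟩, rfl⟩
    simp only [List.get_eq_getElem] at hmid
    refine ⟨q, ?_, ?_, ?_⟩
    · show q < (b.1 ++ [s]).length
      simp; omega
    · simp only [List.get_eq_getElem]
      show (b.1 ++ [s])[q]'_ = CSym.mid
      refine (List.getElem_append_left hq).trans ?_
      exact hmid
    · show c'.1 ++ [s] = (b.1 ++ [s]).set q (f ((List.take q (b.1 ++ [s])).count CSym.mid))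
      rw [List.set_append, if_pos hq, List.take_append_of_le_length (le_of_lt hq), hset]

private lemma face_appO (f : ℕ → CSym) {n j : ℕ} (a : Str n (j+1))
    (hf : f (j+1) ≠ CSym.mid) :
    face f (appO a) = appO '' face f a ∪ {apps (f (j+1)) hf a} := by
  have hla : a.1.length = n := a.2.1
  ext c
  constructor
  · rintro ⟨q, h, hmid, hset⟩
    simp only [List.get_eq_getElem] at hmid
    have hqn1 : q < n + 1 := by
      have : q < (a.1 ++ [CSym.mid]).length := h
      simpa [hla] using this
    rcases Nat.lt_or_ge q a.1.length with hq | hq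
    · left
      have hset' : c.1 = a.1.set q (f ((a.1.take q).count CSym.mid)) ++ [CSym.mid] := by
        rw [hset]
        show (a.1 ++ [CSym.mid]).set q (f ((List.take q (a.1 ++ [CSym.mid])).count CSym.mid)) = _
        rw [List.take_append_of_le_length (le_of_lt hq), List.set_append, if_pos hq]
      have hccnt : c.1.count CSym.mid = j + 1 := c.2.2
      refine ⟨⟨a.1.set q (f ((a.1.take q).count CSym.mid)), ?_, ?_⟩, ⟨q, hq, ?_, rfl⟩, ?_⟩
      · simp [hla]
      · rw [hset', List.count_append] at hccnt
        simp at hccnt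
        omega
      · simp only [List.get_eq_getElem]
        have hget : (a.1 ++ [CSym.mid])[q]'(by simp; omega) = a.1[q] :=
          List.getElem_append_left hq
        have hmid' : (a.1 ++ [CSym.mid])[q]'(by simp; omega) = CSym.mid := hmid
        exact hget.symm.trans hmid'
      · exact Subtype.ext hset'.symm
    · right
      have hqe : q = a.1.length := by omega
      have hset' : c.1 = a.1 ++ [f (j+1)] := by
        rw [hset]
        show (a.1 ++ [CSym.mid]).set q (f ((List.take q (a.1 ++ [CSym.mid])).count CSym.mid)) = _
        rw [List.take_append_of_le_length (le_of_eq hqe), hqe, List.take_length, a.2.2,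
          List.set_append, if_neg (by omega)]
        simp
      exact Set.mem_singleton_iff.mpr (Subtype.ext hset')
  · rintro (⟨c', ⟨q, hq, hmid, hset⟩, rfl⟩ | hc)
    · simp only [List.get_eq_getElem] at hmid
      refine ⟨q, ?_, ?_, ?_⟩
      · show q < (a.1 ++ [CSym.mid]).length
        simp; omega
      · simp only [List.get_eq_getElem]
        show (a.1 ++ [CSym.mid])[q]'_ = CSym.mid
        refine (List.getElem_append_left hq).trans ?_
        exact hmid
      · show c'.1 ++ [CSym.mid]
          = (a.1 ++ [CSym.mid]).set q (f ((List.take q (a.1 ++ [CSym.mid])).count CSym.mid))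
        rw [List.set_append, if_pos hq, List.take_append_of_le_length (le_of_lt hq), hset]
    · have hc' : c = apps (f (j+1)) hf a := hc
      refine ⟨a.1.length, ?_, ?_, ?_⟩
      · show a.1.length < (a.1 ++ [CSym.mid]).length
        simp
      · simp only [List.get_eq_getElem]
        exact List.getElem_concat_length rfl _
      · show c.1 = (a.1 ++ [CSym.mid]).set a.1.length
          (f ((List.take a.1.length (a.1 ++ [CSym.mid])).count CSym.mid))
        rw [List.take_append_of_le_length (le_refl _), List.take_length, a.2.2,
          List.set_append, if_neg (by omega)]
        simp [hc', apps]

end Aux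
section Aux2

private def fP : ℕ → CSym := fun k => if Even k then CSym.plus else CSym.minus
private def fN : ℕ → CSym := fun k => if Even k then CSym.minus else CSym.plus

private lemma posF_eq_faceP {n j : ℕ} (a : Str n (j+1)) : posF a = face fP a := rfl
private lemma negF_eq_faceN {n j : ℕ} (a : Str n (j+1)) : negF a = face fN a := rfl

private lemma apps_congr {s t : CSym} (hst : s = t) (hs : s ≠ CSym.mid) (ht : t ≠ CSym.mid)
    {n j : ℕ} (a : Str n j) : apps s hs a = apps t ht a := by
  subst hst; rfl

private lemma appM_injective {n j : ℕ} : Function.Injective (appM (n := n) (j := j)) := by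
  intro a b h
  exact Subtype.ext (app_inj_sym (congrArg Subtype.val h)).1

private lemma appP_injective {n j : ℕ} : Function.Injective (appP (n := n) (j := j)) := by
  intro a b h
  exact Subtype.ext (app_inj_sym (congrArg Subtype.val h)).1

private lemma posF_appM {n j : ℕ} (b : Str n (j+2)) : posF (appM b) = appM '' posF b := by
  rw [posF_eq_faceP, appM_eq b, face_apps, ← posF_eq_faceP]
  exact congrArg (· '' posF b) (funext fun a => (appM_eq a).symm)

private lemma negF_appM {n j : ℕ} (b : Str n (j+2)) : negF (appM b) = appM '' negF b := by
  rw [negF_eq_faceN, appM_eq b, face_apps, ← negF_eq_faceN]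
  exact congrArg (· '' negF b) (funext fun a => (appM_eq a).symm)

private lemma posF_appP {n j : ℕ} (b : Str n (j+2)) : posF (appP b) = appP '' posF b := by
  rw [posF_eq_faceP, appP_eq b, face_apps, ← posF_eq_faceP]
  exact congrArg (· '' posF b) (funext fun a => (appP_eq a).symm)

private lemma negF_appP {n j : ℕ} (b : Str n (j+2)) : negF (appP b) = appP '' negF b := by
  rw [negF_eq_faceN, appP_eq b, face_apps, ← negF_eq_faceN]
  exact congrArg (· '' negF b) (funext fun a => (appP_eq a).symm)

private lemma posF_appO {n j : ℕ} (hje : Even (j+1)) (a : Str n (j+1)) :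
    posF (appO a) = appO '' posF a ∪ {appP a} := by
  have hf : fP (j+1) ≠ CSym.mid := by simp [fP, if_pos hje]
  rw [posF_eq_faceP, face_appO fP a hf, ← posF_eq_faceP]
  congr 1
  have : apps (fP (j+1)) hf a = appP a :=
    (apps_congr (by simp [fP, if_pos hje]) hf (by simp) a).trans (appP_eq a).symm
  rw [this]

private lemma negF_appO {n j : ℕ} (hje : Even (j+1)) (a : Str n (j+1)) :
    negF (appO a) = appO '' negF a ∪ {appM a} := by
  have hf : fN (j+1) ≠ CSym.mid := by simp [fN, if_pos hje]
  rw [negF_eq_faceN, face_appO fN a hf, ← negF_eq_faceN]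
  congr 1
  have : apps (fN (j+1)) hf a = appM a :=
    (apps_congr (by simp [fN, if_pos hje]) hf (by simp) a).trans (appM_eq a).symm
  rw [this]

private lemma inter_empty_of_last {n k : ℕ} {A B : Set (Str (n+1) k)} {s t : CSym} (hst : s ≠ t)
    (hA : ∀ c ∈ A, ∃ l, c.1 = l ++ [s]) (hB : ∀ c ∈ B, ∃ l, c.1 = l ++ [t]) : A ∩ B = ∅ := by
  ext c
  simp only [Set.mem_inter_iff, Set.mem_empty_iff_false, iff_false, not_and]
  intro hcA hcB
  obtain ⟨l, hl⟩ := hA c hcA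
  obtain ⟨l', hl'⟩ := hB c hcB
  exact hst (app_inj_sym (hl.symm.trans hl')).2

private lemma lastW_image {n k k' : ℕ} {g : Str n k → Str (n+1) k'} {s : CSym}
    (hg : ∀ a, (g a).1 = a.1 ++ [s]) (S : Set (Str n k)) :
    ∀ c ∈ g '' S, ∃ l, c.1 = l ++ [s] := by
  rintro c ⟨a, -, rfl⟩; exact ⟨a.1, hg a⟩

private lemma lastW_single {n k : ℕ} {d : Str (n+1) k} {s : CSym} (hd : ∃ l, d.1 = l ++ [s]) :
    ∀ c ∈ ({d} : Set (Str (n+1) k)), ∃ l, c.1 = l ++ [s] := by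
  rintro c rfl; exact hd

private lemma union_inter_union_empty {α : Type*} {X1 X2 Y1 Y2 : Set α}
    (h11 : X1 ∩ Y1 = ∅) (h12 : X1 ∩ Y2 = ∅) (h21 : X2 ∩ Y1 = ∅) (h22 : X2 ∩ Y2 = ∅) :
    (X1 ∪ X2) ∩ (Y1 ∪ Y2) = ∅ := by
  rw [Set.union_inter_distrib_right, Set.inter_union_distrib_left, Set.inter_union_distrib_left,
    h11, h12, h21, h22]
  simp

private lemma inter_union_empty {α : Type*} {X Y1 Y2 : Set α}
    (h1 : X ∩ Y1 = ∅) (h2 : X ∩ Y2 = ∅) : X ∩ (Y1 ∪ Y2) = ∅ := by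
  rw [Set.inter_union_distrib_left, h1, h2]; simp

end Aux2
/-- If `x`, `x̄`, `x̂` are well-formed with `x̄⁻ ∩ x = ∅` and `x̂⁺ ∩ x = ∅`,
then `x̄⊖ ∪ x⊙ ∪ x̂⊕` is well-formed; moreover elements of `x̄⊖` and `x̂⊕`
share no face at all. -/
theorem cube_union_wf_of_wf (n j : ℕ) (hj : Odd j)
    (x : Set (Str n (j+1))) (xb xh : Set (Str n (j+2)))
    (hx : WfC x) (hxb : WfC xb) (hxh : WfC xh)
    (hb : sNeg xb ∩ x = ∅) (hh : sPos xh ∩ x = ∅) :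
    WfC (appM '' xb ∪ appO '' x ∪ appP '' xh) ∧
    (∀ a ∈ appM '' xb, ∀ b ∈ appP '' xh,
      posF a ∩ posF b = ∅ ∧ negF a ∩ negF b = ∅) := by
  have hje : Even (j+1) := hj.add_one
  have hbx : ∀ b' ∈ xb, ∀ a' ∈ x, a' ∉ negF b' := by
    intro b' hb' a' ha' hmem
    have hmem2 : a' ∈ sNeg xb ∩ x := ⟨Set.mem_biUnion hb' hmem, ha'⟩
    rw [hb] at hmem2
    exact hmem2
  have hhx : ∀ b' ∈ xh, ∀ a' ∈ x, a' ∉ posF b' := by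
    intro b' hb' a' ha' hmem
    have hmem2 : a' ∈ sPos xh ∩ x := ⟨Set.mem_biUnion hb' hmem, ha'⟩
    rw [hh] at hmem2
    exact hmem2
  have hMP : ∀ a' ∈ xb, ∀ c' ∈ xh,
      posF (appM a') ∩ posF (appP c') = ∅ ∧ negF (appM a') ∩ negF (appP c') = ∅ := by
    intro a' _ c' _
    constructor
    · rw [posF_appM, posF_appP]
      exact inter_empty_of_last (by decide : CSym.minus ≠ CSym.plus)
        (lastW_image (fun _ => rfl) _) (lastW_image (fun _ => rfl) _)
    · rw [negF_appM, negF_appP]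
      exact inter_empty_of_last (by decide : CSym.minus ≠ CSym.plus)
        (lastW_image (fun _ => rfl) _) (lastW_image (fun _ => rfl) _)
  have hMM : ∀ a' ∈ xb, ∀ c' ∈ xb, a' ≠ c' →
      posF (appM a') ∩ posF (appM c') = ∅ ∧ negF (appM a') ∩ negF (appM c') = ∅ := by
    intro a' ha' c' hc' hne
    obtain ⟨h1, h2⟩ := hxb a' ha' c' hc' hne
    constructor
    · rw [posF_appM, posF_appM, ← Set.image_inter appM_injective, h1, Set.image_empty]
    · rw [negF_appM, negF_appM, ← Set.image_inter appM_injective, h2, Set.image_empty]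
  have hPP : ∀ a' ∈ xh, ∀ c' ∈ xh, a' ≠ c' →
      posF (appP a') ∩ posF (appP c') = ∅ ∧ negF (appP a') ∩ negF (appP c') = ∅ := by
    intro a' ha' c' hc' hne
    obtain ⟨h1, h2⟩ := hxh a' ha' c' hc' hne
    constructor
    · rw [posF_appP, posF_appP, ← Set.image_inter appP_injective, h1, Set.image_empty]
    · rw [negF_appP, negF_appP, ← Set.image_inter appP_injective, h2, Set.image_empty]
  have hOO : ∀ a' ∈ x, ∀ c' ∈ x, a' ≠ c' →
      posF (appO a') ∩ posF (appO c') = ∅ ∧ negF (appO a') ∩ negF (appO c') = ∅ := by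
    intro a' ha' c' hc' hne
    obtain ⟨h1, h2⟩ := hx a' ha' c' hc' hne
    constructor
    · rw [posF_appO hje, posF_appO hje]
      refine union_inter_union_empty ?_ ?_ ?_ ?_
      · rw [← Set.image_inter appO_injective, h1, Set.image_empty]
      · exact inter_empty_of_last (by decide : CSym.mid ≠ CSym.plus)
          (lastW_image (fun _ => rfl) _) (lastW_single ⟨c'.1, rfl⟩)
      · exact inter_empty_of_last (by decide : CSym.plus ≠ CSym.mid)
          (lastW_single ⟨a'.1, rfl⟩) (lastW_image (fun _ => rfl) _)
      · rw [Set.singleton_inter_eq_empty, Set.mem_singleton_iff]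
        exact fun h => hne (appP_injective h)
    · rw [negF_appO hje, negF_appO hje]
      refine union_inter_union_empty ?_ ?_ ?_ ?_
      · rw [← Set.image_inter appO_injective, h2, Set.image_empty]
      · exact inter_empty_of_last (by decide : CSym.mid ≠ CSym.minus)
          (lastW_image (fun _ => rfl) _) (lastW_single ⟨c'.1, rfl⟩)
      · exact inter_empty_of_last (by decide : CSym.minus ≠ CSym.mid)
          (lastW_single ⟨a'.1, rfl⟩) (lastW_image (fun _ => rfl) _)
      · rw [Set.singleton_inter_eq_empty, Set.mem_singleton_iff]
        exact fun h => hne (appM_injective h)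
  have hMO : ∀ a' ∈ xb, ∀ c' ∈ x,
      posF (appM a') ∩ posF (appO c') = ∅ ∧ negF (appM a') ∩ negF (appO c') = ∅ := by
    intro a' ha' c' hc'
    constructor
    · rw [posF_appM, posF_appO hje]
      refine inter_union_empty ?_ ?_
      · exact inter_empty_of_last (by decide : CSym.minus ≠ CSym.mid)
          (lastW_image (fun _ => rfl) _) (lastW_image (fun _ => rfl) _)
      · exact inter_empty_of_last (by decide : CSym.minus ≠ CSym.plus)
          (lastW_image (fun _ => rfl) _) (lastW_single ⟨c'.1, rfl⟩)
    · rw [negF_appM, negF_appO hje]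
      refine inter_union_empty ?_ ?_
      · exact inter_empty_of_last (by decide : CSym.minus ≠ CSym.mid)
          (lastW_image (fun _ => rfl) _) (lastW_image (fun _ => rfl) _)
      · rw [← Set.image_singleton (f := appM), ← Set.image_inter appM_injective,
          Set.inter_singleton_eq_empty.mpr (hbx a' ha' c' hc'), Set.image_empty]
  have hPO : ∀ a' ∈ xh, ∀ c' ∈ x,
      posF (appP a') ∩ posF (appO c') = ∅ ∧ negF (appP a') ∩ negF (appO c') = ∅ := by
    intro a' ha' c' hc'
    constructor
    · rw [posF_appP, posF_appO hje]
      refine inter_union_empty ?_ ?_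
      · exact inter_empty_of_last (by decide : CSym.plus ≠ CSym.mid)
          (lastW_image (fun _ => rfl) _) (lastW_image (fun _ => rfl) _)
      · rw [← Set.image_singleton (f := appP), ← Set.image_inter appP_injective,
          Set.inter_singleton_eq_empty.mpr (hhx a' ha' c' hc'), Set.image_empty]
    · rw [negF_appP, negF_appO hje]
      refine inter_union_empty ?_ ?_
      · exact inter_empty_of_last (by decide : CSym.plus ≠ CSym.mid)
          (lastW_image (fun _ => rfl) _) (lastW_image (fun _ => rfl) _)
      · exact inter_empty_of_last (by decide : CSym.plus ≠ CSym.minus)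
          (lastW_image (fun _ => rfl) _) (lastW_single ⟨c'.1, rfl⟩)
  have key2 : ∀ a ∈ appM '' xb, ∀ b ∈ appP '' xh,
      posF a ∩ posF b = ∅ ∧ negF a ∩ negF b = ∅ := by
    rintro a ⟨a', ha', rfl⟩ b ⟨c', hc', rfl⟩
    exact hMP a' ha' c' hc'
  refine ⟨?_, key2⟩
  have comm : ∀ {k : ℕ} {A B : Set (Str (n+1) k)}, A ∩ B = ∅ → B ∩ A = ∅ := by
    intro k A B h
    rw [Set.inter_comm]
    exact h
  rintro a ((⟨a', ha', rfl⟩ | ⟨a', ha', rfl⟩) | ⟨a', ha', rfl⟩)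
    b ((⟨c', hc', rfl⟩ | ⟨c', hc', rfl⟩) | ⟨c', hc', rfl⟩) hne
  · exact hMM a' ha' c' hc' (fun h => hne (by rw [h]))
  · exact hMO a' ha' c' hc'
  · exact hMP a' ha' c' hc'
  · obtain ⟨h1, h2⟩ := hMO c' hc' a' ha'
    exact ⟨comm h1, comm h2⟩
  · exact hOO a' ha' c' hc' (fun h => hne (by rw [h]))
  · obtain ⟨h1, h2⟩ := hPO c' hc' a' ha'
    exact ⟨comm h1, comm h2⟩
  · obtain ⟨h1, h2⟩ := hMP c' hc' a' ha'
    exact ⟨comm h1, comm h2⟩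
  · exact hPO a' ha' c' hc'
  · exact hPP a' ha' c' hc' (fun h => hne (by rw [h]))
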